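/- arXiv:2405.14432 — 5 statements merged into one kernel-verified Lean document; each statement's English description precedes it below -/
import Mathlib

section
/- Let x_1,…,x_m ∈ ℝ^d with mean x̄, let C ≥ 0, set yᵢ = clip_C(xᵢ), and let S_c = {i : ‖xᵢ‖ > C}. For each i ∈ S_c, ‖yᵢ − x̄‖² − ‖xᵢ − x̄‖² ≤ (‖xᵢ‖ − C)(2‖x̄‖ − ‖xᵢ‖ − C). -/
noncomputable def clip {d : ℕ} (C : ℝ) (x : EuclideanSpace ℝ (Fin d)) :
    EuclideanSpace ℝ (Fin d) :=
  (min 1 (C / ‖x‖)) • x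

theorem one_point_clipping_bound {d m : ℕ} (C : ℝ) (hC : 0 ≤ C)
    (x : Fin m → EuclideanSpace ℝ (Fin d)) (i : Fin m) (hi : ‖x i‖ > C) :
    ‖clip C (x i) - (m : ℝ)⁻¹ • ∑ j, x j‖ ^ 2 - ‖x i - (m : ℝ)⁻¹ • ∑ j, x j‖ ^ 2
      ≤ (‖x i‖ - C) * (2 * ‖(m : ℝ)⁻¹ • ∑ j, x j‖ - ‖x i‖ - C) := by
  set v := (m : ℝ)⁻¹ • ∑ j, x j with hv
  have hx : 0 < ‖x i‖ := lt_of_le_of_lt hC hi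
  have ht : C / ‖x i‖ ≤ 1 := (div_le_one hx).2 hi.le
  have hclip : clip C (x i) = (C / ‖x i‖) • x i := by
    rw [clip, min_eq_right ht]
  have hny : ‖clip C (x i)‖ = C := by
    rw [hclip, norm_smul, Real.norm_eq_abs, abs_of_nonneg (div_nonneg hC hx.le),
      div_mul_cancel₀ _ hx.ne']
  have h1 := norm_sub_sq_real (clip C (x i)) v
  rw [hny] at h1
  have h2 : ‖x i - v‖ ^ 2 = ‖x i‖ ^ 2 - 2 * (inner ℝ (x i) v : ℝ) + ‖v‖ ^ 2 :=
    norm_sub_sq_real _ _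
  have hinner : (inner ℝ (clip C (x i)) v : ℝ) = (C / ‖x i‖) * inner ℝ (x i) v := by
    rw [hclip, real_inner_smul_left]
  have hle : (inner ℝ (x i) v : ℝ) ≤ ‖x i‖ * ‖v‖ := real_inner_le_norm _ _
  have hcoef : 0 ≤ 1 - C / ‖x i‖ := by linarith
  have hdiv : C / ‖x i‖ * ‖x i‖ = C := div_mul_cancel₀ _ hx.ne'
  nlinarith [mul_nonneg hcoef (sub_nonneg.2 hle)]
end

section
/- Variance reduction under clipping, case ‖x̄‖ > C: with the notation above and ‖x̄‖ > C, (1/m)Σᵢ‖yᵢ − ȳ‖² ≤ (1/m)Σᵢ‖xᵢ − x̄‖² − (|S∖S_c|/m)(‖x̄‖ − C)² − (1/m)Σ_{i∈S_c}(‖xᵢ‖ − ‖x̄‖)². -/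
open scoped Classical RealInnerProductSpace

lemma sum_sq_sub_mean_le {E : Type*} [NormedAddCommGroup E] [InnerProductSpace ℝ E]
    {m : ℕ} (hm : 0 < m) (y : Fin m → E) (v : E) :
    ∑ i, ‖y i - (m:ℝ)⁻¹ • ∑ j, y j‖^2 ≤ ∑ i, ‖y i - v‖^2 := by
  set b : E := (m:ℝ)⁻¹ • ∑ j, y j with hb
  have hm' : (m:ℝ) ≠ 0 := Nat.cast_ne_zero.2 hm.ne'
  have hmpos : (0:ℝ) < (m:ℝ) := Nat.cast_pos.2 hm
  have hsum : ∑ i, (y i - v) = (m:ℝ) • (b - v) := by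
    rw [hb, smul_sub, smul_smul, mul_inv_cancel₀ hm', one_smul]
    rw [Finset.sum_sub_distrib, Finset.sum_const, Finset.card_univ, Fintype.card_fin]
    rw [Nat.cast_smul_eq_nsmul ℝ]
  have expand : ∀ i, ‖y i - b‖^2
      = ‖y i - v‖^2 - 2 * ⟪y i - v, b - v⟫ + ‖b - v‖^2 := by
    intro i
    have h : y i - b = (y i - v) - (b - v) := by abel
    rw [h, norm_sub_sq_real]
  have hinner : ∑ i, ⟪y i - v, b - v⟫ = (m:ℝ) * ‖b - v‖^2 := by
    rw [← sum_inner, hsum, real_inner_smul_left, real_inner_self_eq_norm_sq]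
  calc ∑ i, ‖y i - b‖^2
      = ∑ i, (‖y i - v‖^2 - 2 * ⟪y i - v, b - v⟫ + ‖b - v‖^2) := by
        exact Finset.sum_congr rfl fun i _ => expand i
    _ = ∑ i, ‖y i - v‖^2 - 2 * ∑ i, ⟪y i - v, b - v⟫ + (m:ℝ) * ‖b - v‖^2 := by
        rw [Finset.sum_add_distrib, Finset.sum_sub_distrib, ← Finset.mul_sum,
          Finset.sum_const, Finset.card_univ, Fintype.card_fin, nsmul_eq_mul]
    _ = ∑ i, ‖y i - v‖^2 - (m:ℝ) * ‖b - v‖^2 := by rw [hinner]; ring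
    _ ≤ ∑ i, ‖y i - v‖^2 := by nlinarith [sq_nonneg ‖b - v‖]

lemma small_case {E : Type*} [NormedAddCommGroup E] [InnerProductSpace ℝ E]
    (C : ℝ) (hC : 0 ≤ C) (a xb : E) (hCR : C < ‖xb‖) (ha : ‖a‖ ≤ C) :
    ‖a - (C/‖xb‖) • xb‖^2 + (‖xb‖ - C)^2 ≤ ‖a - xb‖^2 := by
  have hR : (0:ℝ) < ‖xb‖ := lt_of_le_of_lt hC hCR
  have ht : ⟪a, xb⟫ ≤ ‖a‖ * ‖xb‖ := real_inner_le_norm a xb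
  rw [norm_sub_sq_real, norm_sub_sq_real, real_inner_smul_right, norm_smul]
  rw [Real.norm_eq_abs, abs_of_nonneg (div_nonneg hC hR.le)]
  have h1 : C/‖xb‖ * ‖xb‖ = C := div_mul_cancel₀ C hR.ne'
  rw [h1]
  nlinarith [mul_le_mul_of_nonneg_right ht (by linarith : (0:ℝ) ≤ ‖xb‖ - C),
    mul_le_mul_of_nonneg_right ha hR.le]

lemma large_case {E : Type*} [NormedAddCommGroup E] [InnerProductSpace ℝ E]
    (C : ℝ) (hC : 0 ≤ C) (a xb : E) (hCR : C < ‖xb‖) (ha : C < ‖a‖) :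
    ‖(C/‖a‖) • a - (C/‖xb‖) • xb‖^2 + (‖a‖ - ‖xb‖)^2 ≤ ‖a - xb‖^2 := by
  have hR : (0:ℝ) < ‖xb‖ := lt_of_le_of_lt hC hCR
  have hr : (0:ℝ) < ‖a‖ := lt_of_le_of_lt hC ha
  have ht : ⟪a, xb⟫ ≤ ‖a‖ * ‖xb‖ := real_inner_le_norm a xb
  rw [norm_sub_sq_real, norm_sub_sq_real, real_inner_smul_right, real_inner_smul_left,
    norm_smul, norm_smul]
  rw [Real.norm_eq_abs, Real.norm_eq_abs, abs_of_nonneg (div_nonneg hC hR.le),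
    abs_of_nonneg (div_nonneg hC hr.le)]
  have h1 : C/‖xb‖ * ‖xb‖ = C := div_mul_cancel₀ C hR.ne'
  have h2 : C/‖a‖ * ‖a‖ = C := div_mul_cancel₀ C hr.ne'
  rw [h1, h2]
  have hCC : C^2 ≤ ‖a‖ * ‖xb‖ := by nlinarith
  have key : ⟪a, xb⟫ - (‖a‖*‖xb‖ - C^2) ≤ C / ‖xb‖ * (C / ‖a‖ * ⟪a, xb⟫) := by
    have h3 : C / ‖xb‖ * (C / ‖a‖ * ⟪a, xb⟫) = C^2 * ⟪a, xb⟫ / (‖a‖*‖xb‖) := by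
      field_simp
    rw [h3, le_div_iff₀ (by positivity)]
    nlinarith [mul_le_mul_of_nonneg_right ht (by linarith : (0:ℝ) ≤ ‖a‖*‖xb‖ - C^2)]
  nlinarith

lemma clip_big {d : ℕ} {C : ℝ} (hC : 0 ≤ C) {a : EuclideanSpace ℝ (Fin d)}
    (h : C < ‖a‖) : clip C a = (C/‖a‖) • a := by
  unfold clip
  rw [min_eq_right (div_le_one (lt_of_le_of_lt hC h) |>.mpr h.le)]

lemma clip_small {d : ℕ} {C : ℝ} {a : EuclideanSpace ℝ (Fin d)}
    (h : ‖a‖ ≤ C) : clip C a = a := by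
  unfold clip
  rcases eq_or_lt_of_le (norm_nonneg a) with h0 | h0
  · have : a = 0 := norm_eq_zero.mp h0.symm
    simp [this]
  · rw [min_eq_left ((one_le_div h0).mpr h), one_smul]

theorem variance_reduction_large_mean {d m : ℕ} (hm : 0 < m) (C : ℝ) (hC : 0 ≤ C)
    (x : Fin m → EuclideanSpace ℝ (Fin d))
    (hxbar : ‖(m : ℝ)⁻¹ • ∑ j, x j‖ > C) :
    (1 / (m : ℝ)) * ∑ i, ‖clip C (x i) - (m : ℝ)⁻¹ • ∑ j, clip C (x j)‖ ^ 2
      ≤ (1 / (m : ℝ)) * ∑ i, ‖x i - (m : ℝ)⁻¹ • ∑ j, x j‖ ^ 2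
        - (((Finset.univ.filter (fun i => ¬ ‖x i‖ > C)).card : ℝ) / (m : ℝ))
            * (‖(m : ℝ)⁻¹ • ∑ j, x j‖ - C) ^ 2
        - (1 / (m : ℝ)) * ∑ i ∈ Finset.univ.filter (fun i => ‖x i‖ > C),
            (‖x i‖ - ‖(m : ℝ)⁻¹ • ∑ j, x j‖) ^ 2 := by
  have hm' : (0:ℝ) < (m:ℝ) := Nat.cast_pos.2 hm
  set xb : EuclideanSpace ℝ (Fin d) := (m:ℝ)⁻¹ • ∑ j, x j with hxb
  set v : EuclideanSpace ℝ (Fin d) := (C/‖xb‖) • xb with hv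
  have step1 : ∑ i, ‖clip C (x i) - (m:ℝ)⁻¹ • ∑ j, clip C (x j)‖^2
      ≤ ∑ i, ‖clip C (x i) - v‖^2 :=
    sum_sq_sub_mean_le hm (fun i => clip C (x i)) v
  have step2 : ∀ i, ‖clip C (x i) - v‖^2
      ≤ ‖x i - xb‖^2 - (if ‖x i‖ > C then (‖x i‖ - ‖xb‖)^2 else (‖xb‖ - C)^2) := by
    intro i
    by_cases h : ‖x i‖ > C
    · rw [if_pos h, clip_big hC h]
      have := large_case C hC (x i) xb hxbar h
      linarith
    · rw [if_neg h, clip_small (le_of_not_gt h)]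
      have := small_case C hC (x i) xb hxbar (le_of_not_gt h)
      linarith
  have step3 : ∑ i, ‖clip C (x i) - v‖^2
      ≤ ∑ i, ‖x i - xb‖^2
        - ∑ i, (if ‖x i‖ > C then (‖x i‖ - ‖xb‖)^2 else (‖xb‖ - C)^2) := by
    rw [← Finset.sum_sub_distrib]
    exact Finset.sum_le_sum fun i _ => step2 i
  have hsplit : ∑ i, (if ‖x i‖ > C then (‖x i‖ - ‖xb‖)^2 else (‖xb‖ - C)^2)
      = (∑ i ∈ Finset.univ.filter (fun i => ‖x i‖ > C), (‖x i‖ - ‖xb‖)^2)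
        + ((Finset.univ.filter (fun i => ¬ ‖x i‖ > C)).card : ℝ) * (‖xb‖ - C)^2 := by
    rw [Finset.sum_ite, Finset.sum_const, nsmul_eq_mul]
  have main : ∑ i, ‖clip C (x i) - (m:ℝ)⁻¹ • ∑ j, clip C (x j)‖^2
      ≤ ∑ i, ‖x i - xb‖^2
        - ((Finset.univ.filter (fun i => ¬ ‖x i‖ > C)).card : ℝ) * (‖xb‖ - C)^2
        - ∑ i ∈ Finset.univ.filter (fun i => ‖x i‖ > C), (‖x i‖ - ‖xb‖)^2 := by
    have := step1.trans step3
    rw [hsplit] at this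
    linarith
  have hmul := mul_le_mul_of_nonneg_left main (by positivity : (0:ℝ) ≤ 1/(m:ℝ))
  calc (1 / (m : ℝ)) * ∑ i, ‖clip C (x i) - (m:ℝ)⁻¹ • ∑ j, clip C (x j)‖^2
      ≤ (1 / (m : ℝ)) * (∑ i, ‖x i - xb‖^2
        - ((Finset.univ.filter (fun i => ¬ ‖x i‖ > C)).card : ℝ) * (‖xb‖ - C)^2
        - ∑ i ∈ Finset.univ.filter (fun i => ‖x i‖ > C), (‖x i‖ - ‖xb‖)^2) := hmul
    _ = (1 / (m : ℝ)) * ∑ i, ‖x i - xb‖^2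
        - ((Finset.univ.filter (fun i => ¬ ‖x i‖ > C)).card : ℝ) / (m:ℝ) * (‖xb‖ - C)^2
        - (1 / (m : ℝ)) * ∑ i ∈ Finset.univ.filter (fun i => ‖x i‖ > C),
            (‖x i‖ - ‖xb‖)^2 := by ring
end

section
/- Bias dominated by variance when at least one vector is unclipped: with the notation above, if |S∖S_c| ≥ 1 then ‖x̄ − ȳ‖² ≤ (|S_c|/|S∖S_c|)·(1/m)·Σᵢ‖xᵢ − x̄‖². -/
open scoped Classical

theorem bias_dominated_by_variance {d m : ℕ} (hm : 0 < m) (C : ℝ) (hC : 0 ≤ C)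
    (x : Fin m → EuclideanSpace ℝ (Fin d))
    (hunclipped : 1 ≤ (Finset.univ.filter (fun i => ¬ ‖x i‖ > C)).card) :
    ‖(m : ℝ)⁻¹ • ∑ j, x j - (m : ℝ)⁻¹ • ∑ j, clip C (x j)‖ ^ 2
      ≤ (((Finset.univ.filter (fun i => ‖x i‖ > C)).card : ℝ)
            / ((Finset.univ.filter (fun i => ¬ ‖x i‖ > C)).card : ℝ))
          * ((1 / (m : ℝ)) * ∑ i, ‖x i - (m : ℝ)⁻¹ • ∑ j, x j‖ ^ 2) := by
  classical
  set S := Finset.univ.filter (fun i => ‖x i‖ > C) with hS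
  set T := Finset.univ.filter (fun i => ¬ ‖x i‖ > C) with hT
  set xbar : EuclideanSpace ℝ (Fin d) := (m : ℝ)⁻¹ • ∑ j, x j with hxbar
  set u : Fin m → ℝ := fun i => ‖x i - xbar‖ with hu
  set a : ℝ := (S.card : ℝ) with ha
  set b : ℝ := (T.card : ℝ) with hb
  have hb1 : (1:ℝ) ≤ b := by rw [hb]; exact_mod_cast hunclipped
  have hb0 : (0:ℝ) < b := lt_of_lt_of_le one_pos hb1
  have hm0 : (0:ℝ) < (m:ℝ) := by exact_mod_cast hm
  have ha0 : (0:ℝ) ≤ a := Nat.cast_nonneg _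
  have habm : a + b = (m:ℝ) := by
    have h : S.card + T.card = m := by
      rw [hS, hT, Finset.card_filter_add_card_filter_not, Finset.card_univ,
        Fintype.card_fin]
    rw [ha, hb]
    exact_mod_cast h
  have hu0 : ∀ i, 0 ≤ u i := fun i => norm_nonneg _
  -- clip facts
  have hclipT : ∀ i ∈ T, clip C (x i) = x i := by
    intro i hi
    have hle : ‖x i‖ ≤ C := not_lt.mp ((Finset.mem_filter.mp hi).2)
    by_cases h0 : ‖x i‖ = 0
    · have hx0 : x i = 0 := norm_eq_zero.mp h0
      simp [clip, hx0]
    · have hpos : 0 < ‖x i‖ := lt_of_le_of_ne (norm_nonneg _) (Ne.symm h0)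
      have h1 : (1:ℝ) ≤ C / ‖x i‖ := (one_le_div hpos).mpr hle
      simp [clip, min_eq_left h1]
  have hclipS : ∀ i ∈ S, ‖x i - clip C (x i)‖ = ‖x i‖ - C := by
    intro i hi
    have hCx : C < ‖x i‖ := (Finset.mem_filter.mp hi).2
    have hpos : 0 < ‖x i‖ := lt_of_le_of_lt hC hCx
    have hmin : min 1 (C / ‖x i‖) = C / ‖x i‖ :=
      min_eq_right (le_of_lt ((div_lt_one hpos).mpr hCx))
    have hrw : x i - clip C (x i) = (1 - C / ‖x i‖) • x i := by
      rw [clip, hmin, sub_smul, one_smul]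
    have h1 : 0 ≤ 1 - C / ‖x i‖ := by
      have := (div_le_one hpos).mpr (le_of_lt hCx); linarith
    rw [hrw, norm_smul, Real.norm_eq_abs, abs_of_nonneg h1]
    field_simp
  -- key pointwise bound
  have key : ∀ i ∈ S, ‖x i‖ - C ≤ u i + b⁻¹ * ∑ k ∈ T, u k := by
    intro i hi
    have hCx : C < ‖x i‖ := (Finset.mem_filter.mp hi).2
    have hpt : ∀ k ∈ T, ‖x i‖ - C ≤ u i + u k := by
      intro k hk
      have hkC : ‖x k‖ ≤ C := not_lt.mp ((Finset.mem_filter.mp hk).2)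
      have h1 : ‖x i‖ - ‖x k‖ ≤ ‖x i - x k‖ := norm_sub_norm_le _ _
      have h2 : ‖x i - x k‖ ≤ u i + u k := by
        have heq : x i - x k = (x i - xbar) + (xbar - x k) := by abel
        calc ‖x i - x k‖ = ‖(x i - xbar) + (xbar - x k)‖ := by rw [heq]
          _ ≤ ‖x i - xbar‖ + ‖xbar - x k‖ := norm_add_le _ _
          _ = u i + u k := by rw [norm_sub_rev xbar (x k)]
      linarith
    have hsum : b * (‖x i‖ - C) ≤ ∑ k ∈ T, (u i + u k) := by
      have := Finset.sum_le_sum hpt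
      calc b * (‖x i‖ - C) = ∑ _k ∈ T, (‖x i‖ - C) := by
            rw [Finset.sum_const, nsmul_eq_mul, hb]
        _ ≤ ∑ k ∈ T, (u i + u k) := this
    have hexp : ∑ k ∈ T, (u i + u k) = b * u i + ∑ k ∈ T, u k := by
      rw [Finset.sum_add_distrib, Finset.sum_const, nsmul_eq_mul, hb]
    rw [hexp] at hsum
    have hbne : b ≠ 0 := ne_of_gt hb0
    have h3 : b * (‖x i‖ - C) / b ≤ (b * u i + ∑ k ∈ T, u k) / b :=
      (div_le_div_iff_of_pos_right hb0).mpr hsum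
    have h4 : b * (‖x i‖ - C) / b = ‖x i‖ - C := by field_simp
    have h5 : (b * u i + ∑ k ∈ T, u k) / b = u i + b⁻¹ * ∑ k ∈ T, u k := by
      field_simp
    rw [h4, h5] at h3
    exact h3
  -- weights
  set w : Fin m → ℝ := fun i => if ‖x i‖ > C then (1:ℝ) else a / b with hwdef
  have hbound : ‖∑ j, (x j - clip C (x j))‖ ≤ ∑ i, w i * u i := by
    have hsplit := Finset.sum_filter_add_sum_filter_not Finset.univ
      (fun i => ‖x i‖ > C) (fun j => ‖x j - clip C (x j)‖)
    have hTzero : ∑ j ∈ T, ‖x j - clip C (x j)‖ = 0 := by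
      apply Finset.sum_eq_zero
      intro j hj
      rw [hclipT j hj]; simp
    calc ‖∑ j, (x j - clip C (x j))‖ ≤ ∑ j, ‖x j - clip C (x j)‖ :=
          norm_sum_le _ _
      _ = ∑ j ∈ S, ‖x j - clip C (x j)‖ := by
          rw [← hsplit, ← hS, ← hT, hTzero, add_zero]
      _ = ∑ j ∈ S, (‖x j‖ - C) := Finset.sum_congr rfl hclipS
      _ ≤ ∑ j ∈ S, (u j + b⁻¹ * ∑ k ∈ T, u k) := Finset.sum_le_sum key
      _ = ∑ j ∈ S, u j + a * (b⁻¹ * ∑ k ∈ T, u k) := by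
          rw [Finset.sum_add_distrib, Finset.sum_const, nsmul_eq_mul, ha]
      _ = ∑ j ∈ S, w j * u j + ∑ k ∈ T, w k * u k := by
          congr 1
          · apply Finset.sum_congr rfl
            intro j hj
            have : ‖x j‖ > C := (Finset.mem_filter.mp hj).2
            simp [hwdef, this]
          · rw [Finset.mul_sum, Finset.mul_sum]
            apply Finset.sum_congr rfl
            intro k hk
            have hgt : ¬ ‖x k‖ > C := (Finset.mem_filter.mp hk).2
            simp only [hwdef, hgt, if_false]
            ring
      _ = ∑ i, w i * u i := by
          rw [← Finset.sum_filter_add_sum_filter_not Finset.univ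
            (fun i => ‖x i‖ > C) (fun i => w i * u i), ← hS, ← hT]
  have hCS : (∑ i, w i * u i) ^ 2 ≤ (∑ i, w i ^ 2) * (∑ i, u i ^ 2) :=
    Finset.sum_mul_sq_le_sq_mul_sq _ _ _
  have hw2 : ∑ i, w i ^ 2 = a * (m:ℝ) / b := by
    rw [← Finset.sum_filter_add_sum_filter_not Finset.univ
      (fun i => ‖x i‖ > C) (fun i => w i ^ 2), ← hS, ← hT]
    have h1 : ∑ i ∈ S, w i ^ 2 = a := by
      have hss : ∀ i ∈ S, w i ^ 2 = 1 := by
        intro i hi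
        have hgt : ‖x i‖ > C := (Finset.mem_filter.mp hi).2
        simp [hwdef, hgt]
      rw [Finset.sum_congr rfl hss, Finset.sum_const, nsmul_eq_mul, mul_one, ha]
    have h2 : ∑ i ∈ T, w i ^ 2 = (a / b) ^ 2 * b := by
      have htt : ∀ i ∈ T, w i ^ 2 = (a / b) ^ 2 := by
        intro i hi
        have hgt : ¬ ‖x i‖ > C := (Finset.mem_filter.mp hi).2
        simp [hwdef, hgt]
      rw [Finset.sum_congr rfl htt, Finset.sum_const, nsmul_eq_mul, hb]; ring
    rw [h1, h2]
    have hbne : b ≠ 0 := ne_of_gt hb0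
    field_simp
    rw [← habm]; ring
  -- put it together
  have hnonneg_sum : (0:ℝ) ≤ ∑ i, w i * u i := by
    apply Finset.sum_nonneg
    intro i _
    apply mul_nonneg _ (hu0 i)
    rw [hwdef]; dsimp only
    split
    · exact zero_le_one
    · exact div_nonneg ha0 hb0.le
  have hLHS : ‖(m : ℝ)⁻¹ • ∑ j, x j - (m : ℝ)⁻¹ • ∑ j, clip C (x j)‖
      = (m:ℝ)⁻¹ * ‖∑ j, (x j - clip C (x j))‖ := by
    rw [← smul_sub, ← Finset.sum_sub_distrib, norm_smul, Real.norm_eq_abs,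
      abs_of_nonneg (le_of_lt (inv_pos.mpr hm0))]
  rw [hLHS]
  have hV0 : (0:ℝ) ≤ ∑ i, u i ^ 2 := Finset.sum_nonneg fun i _ => sq_nonneg _
  have step1 : ((m:ℝ)⁻¹ * ‖∑ j, (x j - clip C (x j))‖) ^ 2
      ≤ ((m:ℝ)⁻¹) ^ 2 * ((∑ i, w i * u i) ^ 2) := by
    rw [mul_pow]
    apply mul_le_mul_of_nonneg_left _ (sq_nonneg _)
    exact pow_le_pow_left₀ (norm_nonneg _) hbound 2
  have step2 : ((m:ℝ)⁻¹) ^ 2 * ((∑ i, w i * u i) ^ 2)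
      ≤ ((m:ℝ)⁻¹) ^ 2 * ((a * (m:ℝ) / b) * ∑ i, u i ^ 2) := by
    apply mul_le_mul_of_nonneg_left _ (sq_nonneg _)
    calc (∑ i, w i * u i) ^ 2 ≤ (∑ i, w i ^ 2) * (∑ i, u i ^ 2) := hCS
      _ = (a * (m:ℝ) / b) * ∑ i, u i ^ 2 := by rw [hw2]
  have hfinal : ((m:ℝ)⁻¹) ^ 2 * ((a * (m:ℝ) / b) * ∑ i, u i ^ 2)
      = (a / b) * ((1 / (m:ℝ)) * ∑ i, u i ^ 2) := by
    have hmne : (m:ℝ) ≠ 0 := ne_of_gt hm0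
    have hbne : b ≠ 0 := ne_of_gt hb0
    have h2 : (m:ℝ)⁻¹ * (m:ℝ) = 1 := inv_mul_cancel₀ hmne
    have hgen : ∀ V : ℝ, ((m:ℝ)⁻¹) ^ 2 * ((a * (m:ℝ) / b) * V)
        = (a / b) * ((1 / (m:ℝ)) * V) := by
      intro V
      have h1 : ((m:ℝ)⁻¹) ^ 2 * ((a * (m:ℝ) / b) * V)
          = (a / b) * (((m:ℝ)⁻¹ * (m:ℝ)) * ((m:ℝ)⁻¹ * V)) := by ring
      rw [h1, h2, one_mul, one_div]
    exact hgen _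
  calc ((m:ℝ)⁻¹ * ‖∑ j, (x j - clip C (x j))‖) ^ 2
      ≤ ((m:ℝ)⁻¹) ^ 2 * ((∑ i, w i * u i) ^ 2) := step1
    _ ≤ ((m:ℝ)⁻¹) ^ 2 * ((a * (m:ℝ) / b) * ∑ i, u i ^ 2) := step2
    _ = (a / b) * ((1 / (m:ℝ)) * ∑ i, u i ^ 2) := hfinal
end

section
/- An (f,κ)-robust aggregation composed with static clipping is not (f,κ′)-robust for any κ′ ≥ 0: for any fixed C ∈ ℝ⁺, any (f,κ)-robust F with f ≥ 1, and any κ′ ≥ 0, there exist input vectors x_1,…,x_n and a set S of size n−f such that ‖F(clip_C(x_1),…,clip_C(x_n)) − x̄_S‖² > (κ′/|S|)·Σ_{i∈S}‖xᵢ − x̄_S‖². -/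
/-- `(f, κ)`-robustness of an aggregation rule `F`. -/
def Robust {d : ℕ} (n f : ℕ) (κ : ℝ)
    (F : (Fin n → EuclideanSpace ℝ (Fin d)) → EuclideanSpace ℝ (Fin d)) : Prop :=
  ∀ x : Fin n → EuclideanSpace ℝ (Fin d), ∀ S : Finset (Fin n), S.card = n - f →
    ‖F x - (S.card : ℝ)⁻¹ • ∑ i ∈ S, x i‖ ^ 2
      ≤ κ / (S.card : ℝ) * ∑ i ∈ S, ‖x i - (S.card : ℝ)⁻¹ • ∑ j ∈ S, x j‖ ^ 2

theorem static_clipping_breaks_robustness {d n f : ℕ} (hd : 0 < d) (hf : 1 ≤ f)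
    (hn : 2 * f < n) (κ : ℝ)
    (F : (Fin n → EuclideanSpace ℝ (Fin d)) → EuclideanSpace ℝ (Fin d))
    (hF : Robust n f κ F) (C : ℝ) (hC : 0 ≤ C) (κ' : ℝ) (hκ' : 0 ≤ κ') :
    ∃ x : Fin n → EuclideanSpace ℝ (Fin d), ∃ S : Finset (Fin n), S.card = n - f ∧
      κ' / (S.card : ℝ) * ∑ i ∈ S, ‖x i - (S.card : ℝ)⁻¹ • ∑ j ∈ S, x j‖ ^ 2
        < ‖F (fun i => clip C (x i)) - (S.card : ℝ)⁻¹ • ∑ i ∈ S, x i‖ ^ 2 := by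
  -- the common vector v of norm C+1
  set v : EuclideanSpace ℝ (Fin d) := EuclideanSpace.single ⟨0, hd⟩ (C + 1) with hv
  have hvnorm : ‖v‖ = C + 1 := by
    rw [hv, EuclideanSpace.norm_single, Real.norm_eq_abs, abs_of_pos (by linarith : (0:ℝ) < C + 1)]
  have hvne : v ≠ 0 := by
    intro h
    rw [h, norm_zero] at hvnorm
    linarith
  -- the clipped vector
  have hclip : clip C v = (C / (C + 1)) • v := by
    unfold clip
    rw [hvnorm, min_eq_right]
    rw [div_le_one (by linarith)]
    linarith
  have hwne : (C / (C + 1)) • v ≠ v := by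
    intro h
    apply hvne
    have : ((C / (C + 1)) - 1) • v = 0 := by
      rw [sub_smul, one_smul, h, sub_self]
    rcases smul_eq_zero.mp this with h' | h'
    · exfalso
      have : C / (C + 1) < 1 := by
        rw [div_lt_one (by linarith)]; linarith
      linarith [sub_eq_zero.mp h']
    · exact h'
  -- choose S
  obtain ⟨S, -, hScard⟩ := Finset.exists_subset_card_eq
    (show n - f ≤ (Finset.univ : Finset (Fin n)).card by simp only [Finset.card_univ, Fintype.card_fin]; omega)
  have hSpos : 0 < S.card := by rw [hScard]; omega
  have hScast : (S.card : ℝ) ≠ 0 := by positivity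
  refine ⟨fun _ => v, S, hScard, ?_⟩
  -- the mean of a constant family is the constant
  have hmean : ∀ w : EuclideanSpace ℝ (Fin d),
      (S.card : ℝ)⁻¹ • ∑ _i ∈ S, w = w := by
    intro w
    rw [Finset.sum_const, ← Nat.cast_smul_eq_nsmul ℝ, smul_smul,
      inv_mul_cancel₀ hScast, one_smul]
  have hsum0 : ∀ w : EuclideanSpace ℝ (Fin d),
      ∑ i ∈ S, ‖w - (S.card : ℝ)⁻¹ • ∑ _j ∈ S, w‖ ^ 2 = 0 := by
    intro w
    rw [Finset.sum_eq_zero]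
    intro i _
    rw [hmean, sub_self, norm_zero]
    ring
  -- robustness forces F (const clipped) = clipped vector
  have hFv : F (fun _ => clip C v) = (C / (C + 1)) • v := by
    have h := hF (fun _ => clip C v) S hScard
    simp only [hclip] at h ⊢
    rw [hsum0, hmean, mul_zero] at h
    have : ‖F (fun _ => (C / (C + 1)) • v) - (C / (C + 1)) • v‖ = 0 := by
      nlinarith [norm_nonneg (F (fun _ => (C / (C + 1)) • v) - (C / (C + 1)) • v)]
    exact sub_eq_zero.mp (norm_eq_zero.mp this)
  rw [hsum0, hmean, mul_zero, hFv]
  have h1 : (C / (C + 1)) • v - v ≠ 0 := fun h => hwne (sub_eq_zero.mp h)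
  have h2 : 0 < ‖(C / (C + 1)) • v - v‖ := norm_pos_iff.mpr h1
  positivity
end

section
/- Robustness under clipping with an unclipped honest vector: let F be (f,κ)-robust, C ≥ 0, x_1,…,x_n ∈ ℝ^d, S ⊆ [n] with |S| = n−f, and S_c = {i ∈ S : ‖xᵢ‖ > C}. If |S∖S_c| ≥ 1, then ‖F(clip_C(x_1),…,clip_C(x_n)) − x̄_S‖² ≤ κ̃·(1/|S|)·Σ_{i∈S}‖xᵢ − x̄_S‖² with κ̃ = κ + |S_c|/|S∖S_c|. -/
open scoped Classical

lemma clip_of_le {d : ℕ} {C : ℝ} {v : EuclideanSpace ℝ (Fin d)} (h : ‖v‖ ≤ C) :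
    clip C v = v := by
  unfold clip
  rcases eq_or_ne v 0 with rfl | hv
  · simp
  · have hv' : 0 < ‖v‖ := norm_pos_iff.2 hv
    rw [min_eq_left (by rw [le_div_iff₀ hv']; simpa using h), one_smul]

lemma clip_of_gt {d : ℕ} {C : ℝ} (hC : 0 ≤ C) {v : EuclideanSpace ℝ (Fin d)}
    (h : C < ‖v‖) : clip C v = (C / ‖v‖) • v := by
  unfold clip
  have hv' : 0 < ‖v‖ := lt_of_le_of_lt hC h
  rw [min_eq_right (by rw [div_le_one hv']; exact h.le)]

lemma norm_clip_of_gt {d : ℕ} {C : ℝ} (hC : 0 ≤ C) {v : EuclideanSpace ℝ (Fin d)}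
    (h : C < ‖v‖) : ‖clip C v‖ = C := by
  have hv' : 0 < ‖v‖ := lt_of_le_of_lt hC h
  rw [clip_of_gt hC h, norm_smul, Real.norm_eq_abs,
    abs_of_nonneg (div_nonneg hC hv'.le), div_mul_cancel₀ _ hv'.ne']

lemma norm_clip_le {d : ℕ} {C : ℝ} (hC : 0 ≤ C) (v : EuclideanSpace ℝ (Fin d)) :
    ‖clip C v‖ ≤ C := by
  rcases le_or_gt ‖v‖ C with h | h
  · rw [clip_of_le h]; exact h
  · rw [norm_clip_of_gt hC h]

lemma norm_clip_sub_of_gt {d : ℕ} {C : ℝ} (hC : 0 ≤ C) {v : EuclideanSpace ℝ (Fin d)}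
    (h : C < ‖v‖) : ‖clip C v - v‖ = ‖v‖ - C := by
  have hv' : 0 < ‖v‖ := lt_of_le_of_lt hC h
  rw [clip_of_gt hC h]
  have h1 : (C / ‖v‖) • v - v = (C / ‖v‖ - 1) • v := by rw [sub_smul, one_smul]
  have h2 : |C / ‖v‖ - 1| = 1 - C / ‖v‖ := by
    rw [abs_of_nonpos (by rw [sub_nonpos, div_le_one hv']; exact h.le)]; ring
  rw [h1, norm_smul, Real.norm_eq_abs, h2, sub_mul, one_mul, div_mul_cancel₀ _ hv'.ne']


lemma key_arith (κ pR qR sR a b U A : ℝ) (hp : 1 ≤ pR) (hq : 1 ≤ qR) (hs : sR = pR + qR)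
    (hκ : 0 ≤ κ) (ha0 : 0 ≤ a) (hb0 : 0 ≤ b) (hU0 : 0 ≤ U) (hA0 : 0 ≤ A)
    (ha2 : sR * a ^ 2 ≤ κ * U) (hUb : pR * U + sR * qR * b ^ 2 ≤ pR * A) :
    (a + b) ^ 2 ≤ (κ + pR / qR) / sR * A := by
  have hp0 : (0:ℝ) < pR := by linarith
  have hq0 : (0:ℝ) < qR := by linarith
  have hs0 : (0:ℝ) < sR := by linarith
  have hcore : 0 ≤ (pR ^ 2 * qR ^ 2 * sR * b ^ 2) * (κ * U - sR * a ^ 2) :=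
    mul_nonneg
      (mul_nonneg (mul_nonneg (mul_nonneg (sq_nonneg pR) (sq_nonneg qR)) hs0.le) (sq_nonneg b))
      (by linarith)
  have hXY : (pR * qR * sR * (a * b)) ^ 2 ≤ (pR ^ 2 * U) * (κ * sR * qR ^ 2 * b ^ 2) := by
    nlinarith [hcore]
  have hX0 : 0 ≤ pR ^ 2 * U := mul_nonneg (sq_nonneg pR) hU0
  have hY0 : 0 ≤ κ * sR * qR ^ 2 * b ^ 2 :=
    mul_nonneg (mul_nonneg (mul_nonneg hκ hs0.le) (sq_nonneg qR)) (sq_nonneg b)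
  have hZ0 : 0 ≤ pR * qR * sR * (a * b) :=
    mul_nonneg (mul_nonneg (mul_nonneg hp0.le hq0.le) hs0.le) (mul_nonneg ha0 hb0)
  have h2ab : 2 * (pR * qR * sR) * (a * b) ≤ pR ^ 2 * U + κ * sR * qR ^ 2 * b ^ 2 := by
    nlinarith [hXY, sq_nonneg (pR ^ 2 * U - κ * sR * qR ^ 2 * b ^ 2)]
  have h1 : pR * qR * (sR * a ^ 2) ≤ pR * qR * (κ * U) :=
    mul_le_mul_of_nonneg_left ha2 (mul_nonneg hp0.le hq0.le)
  have h2 : 0 ≤ κ * qR + pR := add_nonneg (mul_nonneg hκ hq0.le) hp0.le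
  have h3 : (κ * qR + pR) * (pR * U + sR * qR * b ^ 2) ≤ (κ * qR + pR) * (pR * A) :=
    mul_le_mul_of_nonneg_left hUb h2
  have hfin : pR * (sR * qR * (a + b) ^ 2) ≤ pR * ((κ * qR + pR) * A) := by nlinarith [h1, h2ab, h3]
  have hfin2 : sR * qR * (a + b) ^ 2 ≤ (κ * qR + pR) * A := le_of_mul_le_mul_left hfin hp0
  have hgoalr : (κ + pR / qR) / sR * A = ((κ * qR + pR) * A) / (qR * sR) := by
    field_simp
  rw [hgoalr, le_div_iff₀ (mul_pos hq0 hs0)]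
  nlinarith [hfin2]

set_option maxHeartbeats 1000000 in
theorem robustness_under_clipping_with_unclipped {d n f : ℕ} (κ : ℝ)
    (F : (Fin n → EuclideanSpace ℝ (Fin d)) → EuclideanSpace ℝ (Fin d))
    (hF : Robust n f κ F) (C : ℝ) (hC : 0 ≤ C)
    (x : Fin n → EuclideanSpace ℝ (Fin d))
    (S : Finset (Fin n)) (hS : S.card = n - f)
    (hunclipped : 1 ≤ (S.filter (fun i => ¬ ‖x i‖ > C)).card) :
    ‖F (fun i => clip C (x i)) - (S.card : ℝ)⁻¹ • ∑ i ∈ S, x i‖ ^ 2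
      ≤ (κ + ((S.filter (fun i => ‖x i‖ > C)).card : ℝ)
              / ((S.filter (fun i => ¬ ‖x i‖ > C)).card : ℝ))
          / (S.card : ℝ) * ∑ i ∈ S, ‖x i - (S.card : ℝ)⁻¹ • ∑ j ∈ S, x j‖ ^ 2 := by
  set y : Fin n → EuclideanSpace ℝ (Fin d) := fun i => clip C (x i) with hy
  set Sc := S.filter (fun i => ‖x i‖ > C) with hScdef
  set Su := S.filter (fun i => ¬ ‖x i‖ > C) with hSudef
  set m : EuclideanSpace ℝ (Fin d) := (S.card : ℝ)⁻¹ • ∑ i ∈ S, x i with hm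
  set yb : EuclideanSpace ℝ (Fin d) := (S.card : ℝ)⁻¹ • ∑ i ∈ S, y i with hyb
  have hScS : Sc ⊆ S := Finset.filter_subset _ _
  have hSuS : Su ⊆ S := Finset.filter_subset _ _
  have hpq : Sc.card + Su.card = S.card := by
    rw [hScdef, hSudef]; exact Finset.card_filter_add_card_filter_not _
  have hcard_pos : 0 < S.card := by omega
  have hs_pos : (0:ℝ) < (S.card : ℝ) := by exact_mod_cast hcard_pos
  have hs_ne : ((S.card : ℝ)) ≠ 0 := hs_pos.ne'
  have hyu : ∀ i ∈ Su, y i = x i := by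
    intro i hi
    have := (Finset.mem_filter.1 hi).2
    exact clip_of_le (le_of_not_gt this)
  have hySc : ∀ i ∈ Sc, C < ‖x i‖ := fun i hi => (Finset.mem_filter.1 hi).2
  -- useful sums
  set A : ℝ := ∑ i ∈ S, ‖x i - m‖ ^ 2 with hA
  set U : ℝ := ∑ i ∈ S, ‖y i - yb‖ ^ 2 with hU
  have hA0 : 0 ≤ A := Finset.sum_nonneg fun i _ => sq_nonneg _
  have hU0 : 0 ≤ U := Finset.sum_nonneg fun i _ => sq_nonneg _
  -- main case split
  rcases Nat.eq_zero_or_pos Sc.card with hp0 | hppos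
  · -- no clipped honest vector: y = x on S
    have hSc0 : Sc = ∅ := Finset.card_eq_zero.1 hp0
    have hyx : ∀ i ∈ S, y i = x i := by
      intro i hi
      rcases lt_or_ge C ‖x i‖ with h | h
      · exfalso
        have : i ∈ Sc := Finset.mem_filter.2 ⟨hi, h⟩
        simp [hSc0] at this
      · exact clip_of_le h
    have hsum : ∑ i ∈ S, y i = ∑ i ∈ S, x i := Finset.sum_congr rfl hyx
    have hrob := hF y S hS
    rw [hsum] at hrob
    have hrhs : ∑ i ∈ S, ‖y i - (S.card:ℝ)⁻¹ • ∑ j ∈ S, x j‖ ^ 2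
        = ∑ i ∈ S, ‖x i - (S.card:ℝ)⁻¹ • ∑ j ∈ S, x j‖ ^ 2 :=
      Finset.sum_congr rfl fun i hi => by rw [hyx i hi]
    rw [hrhs] at hrob
    have hcz : ((Sc.card : ℝ)) = 0 := by rw [hp0]; norm_num
    rw [hcz, zero_div, add_zero]
    exact hrob
  · -- some clipped vectors
    have hq_pos : 0 < Su.card := hunclipped
    set pR : ℝ := (Sc.card : ℝ) with hpR
    set qR : ℝ := (Su.card : ℝ) with hqR
    set sR : ℝ := (S.card : ℝ) with hsRdef
    have hp1 : (1:ℝ) ≤ pR := by rw [hpR]; exact_mod_cast Nat.one_le_iff_ne_zero.2 hppos.ne'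
    have hq1 : (1:ℝ) ≤ qR := by rw [hqR]; exact_mod_cast Nat.one_le_iff_ne_zero.2 hq_pos.ne'
    have hsR : sR = pR + qR := by rw [hpR, hqR, hsRdef, ← hpq]; push_cast; ring
    have hp_pos : (0:ℝ) < pR := by linarith
    have hq_posR : (0:ℝ) < qR := by linarith
    set δ : Fin n → ℝ := fun i => ‖x i‖ - C with hδ
    set D : ℝ := ∑ i ∈ Sc, δ i with hD
    set K : ℝ := ∑ i ∈ Sc, δ i ^ 2 with hK
    have hδ0 : ∀ i ∈ Sc, 0 ≤ δ i := fun i hi => by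
      have := hySc i hi; simp only [hδ]; linarith
    have hD0 : 0 ≤ D := Finset.sum_nonneg hδ0
    set b : ℝ := ‖yb - m‖ with hb
    have hb0 : 0 ≤ b := norm_nonneg _
    -- (0) ‖yb‖ ≤ C
    have hybnorm : ‖yb‖ ≤ C := by
      rw [hyb, norm_smul, Real.norm_eq_abs, abs_of_nonneg (inv_nonneg.2 hs_pos.le)]
      have h1 : ‖∑ i ∈ S, y i‖ ≤ ∑ i ∈ S, ‖y i‖ := norm_sum_le _ _
      have h2 : ∑ i ∈ S, ‖y i‖ ≤ ∑ i ∈ S, C :=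
        Finset.sum_le_sum fun i _ => norm_clip_le hC (x i)
      rw [Finset.sum_const, nsmul_eq_mul] at h2
      calc (sR)⁻¹ * ‖∑ i ∈ S, y i‖ ≤ (sR)⁻¹ * (sR * C) := by
            apply mul_le_mul_of_nonneg_left _ (inv_nonneg.2 hs_pos.le)
            exact le_trans h1 h2
        _ = C := by field_simp
    -- (1) sR * b ≤ D
    have hbD : sR * b ≤ D := by
      have h0 : sR • (yb - m) = ∑ i ∈ Sc, (y i - x i) := by
        rw [smul_sub, hyb, hm, smul_inv_smul₀ hs_ne, smul_inv_smul₀ hs_ne,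
          ← Finset.sum_sub_distrib,
          ← Finset.sum_filter_add_sum_filter_not S (fun i => ‖x i‖ > C) (fun i => y i - x i)]
        have hz : ∑ i ∈ Su, (y i - x i) = 0 :=
          Finset.sum_eq_zero fun i hi => by rw [hyu i hi, sub_self]
        rw [← hScdef, ← hSudef, hz, add_zero]
      have h1 : sR * b = ‖∑ i ∈ Sc, (y i - x i)‖ := by
        rw [← h0, norm_smul, Real.norm_eq_abs, abs_of_nonneg hs_pos.le]
      have h2 : ‖∑ i ∈ Sc, (y i - x i)‖ ≤ ∑ i ∈ Sc, δ i := by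
        refine le_trans (norm_sum_le _ _) (Finset.sum_le_sum fun i hi => ?_)
        rw [hy]
        rw [norm_clip_sub_of_gt hC (hySc i hi)]
      rw [h1]; exact h2
    -- (2) D^2 ≤ pR * K
    have hDK : D ^ 2 ≤ pR * K := by
      have := Finset.sum_mul_sq_le_sq_mul_sq Sc (fun _ => (1:ℝ)) δ
      simpa [hD, hK, hpR, Finset.sum_const, nsmul_eq_mul] using this
    -- (3) pointwise lower bound on clipped indices
    have hkey : ∀ i ∈ Sc, δ i ^ 2 - 2 * δ i * b ≤ ‖x i - m‖ ^ 2 - ‖y i - m‖ ^ 2 := by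
      intro i hi
      have hni : C < ‖x i‖ := hySc i hi
      have hyi : ‖y i‖ = C := norm_clip_of_gt hC hni
      have hd : ‖x i - y i‖ = δ i := by
        rw [norm_sub_rev, hy]
        exact norm_clip_sub_of_gt hC hni
      have hinner : (inner ℝ (x i - y i) m : ℝ) ≤ δ i * (C + b) := by
        have hdecomp : (inner ℝ (x i - y i) m : ℝ)
            = (inner ℝ (x i - y i) yb : ℝ) + (inner ℝ (x i - y i) (m - yb) : ℝ) := by
          rw [← inner_add_right]
          congr 1
          abel
        have h1 : (inner ℝ (x i - y i) yb : ℝ) ≤ δ i * C := by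
          calc (inner ℝ (x i - y i) yb : ℝ) ≤ ‖x i - y i‖ * ‖yb‖ := real_inner_le_norm _ _
            _ ≤ δ i * C := by
                rw [hd]
                exact mul_le_mul_of_nonneg_left hybnorm (hδ0 i hi)
        have h2 : (inner ℝ (x i - y i) (m - yb) : ℝ) ≤ δ i * b := by
          calc (inner ℝ (x i - y i) (m - yb) : ℝ) ≤ ‖x i - y i‖ * ‖m - yb‖ :=
                real_inner_le_norm _ _
            _ = δ i * b := by rw [hd, norm_sub_rev]
        linarith [hdecomp, h1, h2]
      have hexp : ‖x i - m‖ ^ 2 - ‖y i - m‖ ^ 2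
          = ‖x i‖ ^ 2 - C ^ 2 - 2 * (inner ℝ (x i - y i) m : ℝ) := by
        rw [norm_sub_sq_real, norm_sub_sq_real, hyi, inner_sub_left]
        ring
      have hnx : ‖x i‖ = δ i + C := by simp only [hδ]; ring
      rw [hexp, hnx]
      nlinarith [hinner, hδ0 i hi]
    -- (4) summed version
    have hsumkey : K - 2 * b * D ≤ (∑ i ∈ Sc, ‖x i - m‖ ^ 2) - ∑ i ∈ Sc, ‖y i - m‖ ^ 2 := by
      have h1 := Finset.sum_le_sum hkey
      rw [Finset.sum_sub_distrib, Finset.sum_sub_distrib] at h1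
      have h2 : ∑ i ∈ Sc, 2 * δ i * b = 2 * b * D := by
        rw [hD, Finset.mul_sum]
        exact Finset.sum_congr rfl fun i _ => by ring
      rw [h2] at h1
      exact h1
    -- (5) splitting S into Sc and Su
    have hxsplit : (∑ i ∈ Sc, ‖x i - m‖ ^ 2) + ∑ i ∈ Su, ‖x i - m‖ ^ 2 = A := by
      rw [hA, hScdef, hSudef]
      exact Finset.sum_filter_add_sum_filter_not S _ _
    have hysplit : (∑ i ∈ Sc, ‖y i - m‖ ^ 2) + ∑ i ∈ Su, ‖x i - m‖ ^ 2
        = ∑ i ∈ S, ‖y i - m‖ ^ 2 := by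
      have h1 : ∑ i ∈ Su, ‖x i - m‖ ^ 2 = ∑ i ∈ Su, ‖y i - m‖ ^ 2 :=
        Finset.sum_congr rfl fun i hi => by rw [hyu i hi]
      rw [h1, hScdef, hSudef]
      exact Finset.sum_filter_add_sum_filter_not S _ _
    have hW : ∑ i ∈ S, ‖y i - m‖ ^ 2 ≤ A - (K - 2 * b * D) := by linarith
    -- (6) variance identity
    have hzero : ∑ i ∈ S, (y i - yb) = 0 := by
      rw [Finset.sum_sub_distrib, Finset.sum_const, hyb]
      rw [← Nat.cast_smul_eq_nsmul ℝ, smul_smul, mul_inv_cancel₀ hs_ne, one_smul, sub_self]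
    have hvar : U = (∑ i ∈ S, ‖y i - m‖ ^ 2) - sR * b ^ 2 := by
      have hterm : ∀ i ∈ S, ‖y i - m‖ ^ 2
          = ‖y i - yb‖ ^ 2 + 2 * (inner ℝ (y i - yb) (yb - m) : ℝ) + b ^ 2 := by
        intro i _
        have h3 : y i - m = (y i - yb) + (yb - m) := by abel
        rw [h3, norm_add_sq_real, hb]
      have hsum2 : ∑ i ∈ S, ‖y i - m‖ ^ 2
          = U + 2 * (inner ℝ (∑ i ∈ S, (y i - yb)) (yb - m) : ℝ) + sR * b ^ 2 := by
        rw [Finset.sum_congr rfl hterm, Finset.sum_add_distrib, Finset.sum_add_distrib,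
          Finset.sum_const, nsmul_eq_mul, sum_inner, ← Finset.mul_sum]
      rw [hsum2, hzero, inner_zero_left]
      ring
    -- (7) the key comparison: pR * U + sR * qR * b^2 ≤ pR * A
    have hfac1 : (0:ℝ) ≤ D - sR * b := by linarith
    have hfac2 : (0:ℝ) ≤ D - (pR - qR) * b := by nlinarith
    have hid : (D - sR * b) * (D - (pR - qR) * b)
        = D ^ 2 - 2 * pR * b * D + sR * (pR - qR) * b ^ 2 := by rw [hsR]; ring
    have hprod' : (0:ℝ) ≤ D ^ 2 - 2 * pR * b * D + sR * (pR - qR) * b ^ 2 :=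
      hid ▸ mul_nonneg hfac1 hfac2
    have hquad : sR * (qR - pR) * b ^ 2 ≤ pR * (K - 2 * b * D) := by
      nlinarith [hprod', hDK]
    have hUb : pR * U + sR * qR * b ^ 2 ≤ pR * A := by
      have h1 : pR * (∑ i ∈ S, ‖y i - m‖ ^ 2) ≤ pR * (A - (K - 2 * b * D)) :=
        mul_le_mul_of_nonneg_left hW hp_pos.le
      nlinarith [hquad, h1, hvar]
    -- (8) robustness applied to clipped inputs
    have hrob := hF y S hS
    have ha2 : sR * ‖F y - yb‖ ^ 2 ≤ κ * U := by
      rw [div_mul_eq_mul_div, le_div_iff₀ hs_pos] at hrob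
      calc sR * ‖F y - yb‖ ^ 2 = ‖F y - yb‖ ^ 2 * sR := by ring
        _ ≤ κ * U := hrob
    set a : ℝ := ‖F y - yb‖ with ha
    have ha0 : 0 ≤ a := norm_nonneg _
    -- (9) κ is nonnegative
    have hκ : 0 ≤ κ := by
      obtain ⟨i0, hi0⟩ := Finset.card_pos.1 hppos
      obtain ⟨j0, hj0⟩ := Finset.card_pos.1 hq_pos
      have hne : i0 ≠ j0 := by
        intro h
        have h1 := (Finset.mem_filter.1 hi0).2
        have h2 := (Finset.mem_filter.1 hj0).2
        rw [h] at h1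
        exact h2 h1
      have hxne : x i0 ≠ x j0 := by
        intro h
        have h1 := hySc i0 hi0
        have h2 := le_of_not_gt (Finset.mem_filter.1 hj0).2
        rw [h] at h1
        linarith
      have hApos : 0 < A := by
        rcases lt_or_ge 0 A with h | h
        · exact h
        · exfalso
          have hz : A = 0 := le_antisymm h hA0
          have := (Finset.sum_eq_zero_iff_of_nonneg fun i (_ : i ∈ S) => sq_nonneg (‖x i - m‖)).1 hz
          have e1 : x i0 = m := by
            have h6 := this i0 (hScS hi0)
            have h5 : ‖x i0 - m‖ = 0 := pow_eq_zero_iff (by norm_num : (2:ℕ) ≠ 0) |>.1 h6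
            exact norm_sub_eq_zero_iff.1 h5
          have e2 : x j0 = m := by
            have h6 := this j0 (hSuS hj0)
            have h5 : ‖x j0 - m‖ = 0 := pow_eq_zero_iff (by norm_num : (2:ℕ) ≠ 0) |>.1 h6
            exact norm_sub_eq_zero_iff.1 h5
          exact hxne (e1.trans e2.symm)
      have h0 := hF x S hS
      have h1 : 0 ≤ κ / sR * A := le_trans (sq_nonneg _) h0
      by_contra hneg
      push_neg at hneg
      have h2 : κ / sR < 0 := div_neg_of_neg_of_pos hneg hs_pos
      have h3 : κ / sR * A < 0 := mul_neg_of_neg_of_pos h2 hApos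
      exact absurd h1 (not_le.2 h3)
    -- (10) triangle inequality
    have htri : ‖F y - m‖ ≤ a + b := by
      have : F y - m = (F y - yb) + (yb - m) := by abel
      rw [this, ha, hb]
      exact norm_add_le _ _
    clear_value pR qR sR a b U A
    have hmain := key_arith κ pR qR sR a b U A hp1 hq1 hsR hκ ha0 hb0 hU0 hA0 ha2 hUb
    calc ‖F y - m‖ ^ 2 ≤ (a + b) ^ 2 := pow_le_pow_left₀ (norm_nonneg _) htri 2
      _ ≤ (κ + pR / qR) / sR * A := hmain
end
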